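/- Let α, y > 0. Then the following four lower bounds hold: S₁(α;y) ≥ 4·e^{−πα(y + 1/(4y))}; S₂(2α;y) ≥ (2/y⁴)·e^{−2πα/y} + 4·(1 − 1/(4y²))²·e^{−2πα(y + 1/(4y))}; S₃(2α;y) ≥ (4y + 1/y)·e^{−2πα(y + 1/(4y))}; S₄(α;y) ≥ (2/y⁵)·e^{−πα/y} + 4·(1 − 1/(4y²))²·(y + 1/(4y))·e^{−πα(y + 1/(4y))}. -/

import Mathlib

open Real

/-- `S₁(α;y) = Σ_{(n,m)∈ℤ²} n² e^{−πα(yn² + (m+n/2)²/y)}`. -/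
noncomputable def S1 (α y : ℝ) : ℝ :=
  ∑' p : ℤ × ℤ, (p.1 : ℝ) ^ 2 *
    Real.exp (-π * α * (y * (p.1 : ℝ) ^ 2 + ((p.2 : ℝ) + (p.1 : ℝ) / 2) ^ 2 / y))

/-- `S₂(α;y) = Σ_{(n,m)∈ℤ²} (n² − (m+n/2)²/y²)² e^{−πα(yn² + (m+n/2)²/y)}`. -/
noncomputable def S2 (α y : ℝ) : ℝ :=
  ∑' p : ℤ × ℤ, ((p.1 : ℝ) ^ 2 - ((p.2 : ℝ) + (p.1 : ℝ) / 2) ^ 2 / y ^ 2) ^ 2 *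
    Real.exp (-π * α * (y * (p.1 : ℝ) ^ 2 + ((p.2 : ℝ) + (p.1 : ℝ) / 2) ^ 2 / y))

/-- `S₃(α;y) = Σ_{(n,m)∈ℤ²} n²(yn² + (m+n/2)²/y) e^{−πα(yn² + (m+n/2)²/y)}`. -/
noncomputable def S3 (α y : ℝ) : ℝ :=
  ∑' p : ℤ × ℤ, (p.1 : ℝ) ^ 2 * (y * (p.1 : ℝ) ^ 2 + ((p.2 : ℝ) + (p.1 : ℝ) / 2) ^ 2 / y) *
    Real.exp (-π * α * (y * (p.1 : ℝ) ^ 2 + ((p.2 : ℝ) + (p.1 : ℝ) / 2) ^ 2 / y))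

/-- `S₄(α;y) = Σ_{(n,m)∈ℤ²} (n² − (m+n/2)²/y²)²(yn² + (m+n/2)²/y) e^{−πα(yn² + (m+n/2)²/y)}`. -/
noncomputable def S4 (α y : ℝ) : ℝ :=
  ∑' p : ℤ × ℤ, ((p.1 : ℝ) ^ 2 - ((p.2 : ℝ) + (p.1 : ℝ) / 2) ^ 2 / y ^ 2) ^ 2 *
    (y * (p.1 : ℝ) ^ 2 + ((p.2 : ℝ) + (p.1 : ℝ) / 2) ^ 2 / y) *
    Real.exp (-π * α * (y * (p.1 : ℝ) ^ 2 + ((p.2 : ℝ) + (p.1 : ℝ) / 2) ^ 2 / y))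

-- auxiliary lemmas
noncomputable def Qf (y : ℝ) (p : ℤ × ℤ) : ℝ :=
  y * (p.1 : ℝ) ^ 2 + ((p.2 : ℝ) + (p.1 : ℝ) / 2) ^ 2 / y

lemma Qf_nonneg {y : ℝ} (hy : 0 < y) (p : ℤ × ℤ) : 0 ≤ Qf y p := by
  unfold Qf; positivity

lemma sq1_le_Qf {y : ℝ} (hy : 0 < y) (p : ℤ × ℤ) : y * (p.1 : ℝ) ^ 2 ≤ Qf y p := by
  unfold Qf; have : 0 ≤ ((p.2 : ℝ) + (p.1 : ℝ) / 2) ^ 2 / y := by positivity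
  linarith

lemma sq2_le_Qf {y : ℝ} (hy : 0 < y) (p : ℤ × ℤ) :
    ((p.2 : ℝ) + (p.1 : ℝ) / 2) ^ 2 / y ≤ Qf y p := by
  unfold Qf; have : 0 ≤ y * (p.1 : ℝ) ^ 2 := by positivity
  linarith

lemma pow_le_exp_aux (s x : ℝ) (hs : 0 < s) (hx : 0 ≤ x) (k : ℕ) (hk : 0 < k) :
    x ^ k ≤ (2 * k / s) ^ k * Real.exp (s * x / 2) := by
  have hk' : (0:ℝ) < (k : ℝ) := by exact_mod_cast hk
  have hz0 : 0 ≤ s * x / (2 * k) := by positivity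
  have hz : s * x / (2 * k) ≤ Real.exp (s * x / (2 * k)) := by
    have := Real.add_one_le_exp (s * x / (2 * k)); linarith
  have h1 : (s * x / (2 * k)) ^ k ≤ Real.exp (s * x / (2 * k)) ^ k :=
    pow_le_pow_left₀ hz0 hz k
  have h2 : Real.exp (s * x / (2 * k)) ^ k = Real.exp (s * x / 2) := by
    rw [← Real.exp_nat_mul]; congr 1; field_simp
  have h3 : x ^ k = (2 * k / s) ^ k * (s * x / (2 * k)) ^ k := by
    rw [← mul_pow]; congr 1; field_simp
  rw [h2] at h1
  rw [h3]
  have hc : (0:ℝ) ≤ (2 * k / s) ^ k := by positivity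
  calc (2 * k / s) ^ k * (s * x / (2 * k)) ^ k ≤ (2 * k / s) ^ k * Real.exp (s * x / 2) :=
    mul_le_mul_of_nonneg_left h1 hc

lemma summable_exp_int (c : ℝ) (hc : 0 < c) :
    Summable fun n : ℤ => Real.exp (-c * (n : ℝ) ^ 2) := by
  have hr0 : (0:ℝ) ≤ Real.exp (-c) := (Real.exp_pos _).le
  have hr1 : Real.exp (-c) < 1 := Real.exp_lt_one_iff.mpr (by linarith)
  have hgeom : Summable fun n : ℕ => Real.exp (-c) ^ n := summable_geometric_of_lt_one hr0 hr1
  have hsum : Summable fun n : ℤ => Real.exp (-c) ^ n.natAbs := by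
    apply Summable.of_nat_of_neg
    · simpa using hgeom
    · simpa using hgeom
  apply Summable.of_nonneg_of_le (fun n => (Real.exp_pos _).le) _ hsum
  intro n
  have h1 : Real.exp (-c) ^ n.natAbs = Real.exp (-c * n.natAbs) := by
    rw [← Real.exp_nat_mul]; ring_nf
  rw [h1]
  apply Real.exp_le_exp.mpr
  have h2 : (n.natAbs : ℝ) ≤ (n : ℝ) ^ 2 := by
    have : (n.natAbs : ℝ) ^ 2 = (n : ℝ) ^ 2 := by
      rw [Nat.cast_natAbs]; push_cast; rw [sq_abs]
    have h3 : n.natAbs ≤ n.natAbs ^ 2 := Nat.le_self_pow two_ne_zero _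
    have h4 : (n.natAbs : ℝ) ≤ (n.natAbs : ℝ) ^ 2 := by exact_mod_cast h3
    linarith [this ▸ h4]
  nlinarith

lemma summable_main (β y : ℝ) (hβ : 0 < β) (hy : 0 < y) (g : ℤ × ℤ → ℝ) (C : ℝ)
    (hg0 : ∀ p, 0 ≤ g p)
    (hgC : ∀ p, g p ≤ C * Real.exp (π * β * Qf y p / 2)) :
    Summable fun p : ℤ × ℤ => g p * Real.exp (-π * β * Qf y p) := by
  have hπ := Real.pi_pos
  set K : ℝ := max (3 / (2 * y)) (2 * y) with hKdef
  have hK2 : 2 * y ≤ K := le_max_right _ _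
  have hK1 : 3 / (2 * y) ≤ K := le_max_left _ _
  have hK0 : 0 < K := lt_of_lt_of_le (by positivity) hK2
  set c : ℝ := π * β / (2 * K) with hcdef
  have hc0 : 0 < c := by positivity
  have hC0 : 0 ≤ C := by
    have := hg0 (0, 0); have := hgC (0, 0)
    nlinarith [Real.exp_pos (π * β * Qf y (0,0) / 2)]
  apply Summable.of_nonneg_of_le
    (fun p => mul_nonneg (hg0 p) (Real.exp_pos _).le)
    (f := fun p : ℤ × ℤ => C * (Real.exp (-c * (p.1 : ℝ) ^ 2) * Real.exp (-c * (p.2 : ℝ) ^ 2)))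
  · intro p
    obtain ⟨n, m⟩ := p
    set a : ℝ := (n : ℝ)
    set b : ℝ := (m : ℝ)
    set Q : ℝ := Qf y (n, m) with hQdef
    have hQ0 : 0 ≤ Q := Qf_nonneg hy _
    have key : a ^ 2 + b ^ 2 ≤ K * Q := by
      have hQy : Q * y = y ^ 2 * a ^ 2 + (b + a / 2) ^ 2 := by
        rw [hQdef]; unfold Qf; field_simp; ring
      have hKy : 3 / 2 ≤ K * y := by
        rw [div_le_iff₀ (by positivity)] at hK1; linarith
      have h5 : (a ^ 2 + b ^ 2) * y ≤ K * (Q * y) := by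
        rw [hQy]
        nlinarith [sq_nonneg (b + a), sq_nonneg a, sq_nonneg (b + a / 2), sq_nonneg b,
          mul_nonneg (sq_nonneg a) hy.le]
      have := (mul_le_mul_iff_of_pos_right hy).mp (by linarith [h5] : (a ^ 2 + b ^ 2) * y ≤ (K * Q) * y)
      exact this
    calc g (n, m) * Real.exp (-π * β * Q)
        ≤ (C * Real.exp (π * β * Q / 2)) * Real.exp (-π * β * Q) :=
          mul_le_mul_of_nonneg_right (hgC (n, m)) (Real.exp_pos _).le
      _ = C * Real.exp (-(π * β / 2) * Q) := by
          rw [mul_assoc, ← Real.exp_add]; congr 2; ring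
      _ ≤ C * (Real.exp (-c * a ^ 2) * Real.exp (-c * b ^ 2)) := by
          rw [← Real.exp_add]
          apply mul_le_mul_of_nonneg_left _ hC0
          apply Real.exp_le_exp.mpr
          have : c * (a ^ 2 + b ^ 2) ≤ π * β / 2 * Q := by
            rw [hcdef]
            rw [div_mul_eq_mul_div, div_le_iff₀ (by positivity)]
            calc π * β * (a ^ 2 + b ^ 2) ≤ π * β * (K * Q) := by
                  apply mul_le_mul_of_nonneg_left key (by positivity)
              _ = π * β / 2 * Q * (2 * K) := by ring
          nlinarith
  · apply Summable.mul_left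
    have h1 := summable_exp_int c hc0
    have := summable_mul_of_summable_norm (R := ℝ) (ι := ℤ) (ι' := ℤ)
      (f := fun n : ℤ => Real.exp (-c * (n : ℝ) ^ 2))
      (g := fun n : ℤ => Real.exp (-c * (n : ℝ) ^ 2)) ?_ ?_
    · exact this
    · simpa [Real.norm_eq_abs, abs_of_pos (Real.exp_pos _)] using h1
    · simpa [Real.norm_eq_abs, abs_of_pos (Real.exp_pos _)] using h1

lemma a_sq_bound {y : ℝ} (hy : 0 < y) (p : ℤ × ℤ) : ((p.1 : ℝ))^2 ≤ Qf y p / y := by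
  rw [le_div_iff₀ hy]; linarith [sq1_le_Qf hy p]

lemma g2_bound {y : ℝ} (hy : 0 < y) (p : ℤ × ℤ) :
    ((p.1 : ℝ) ^ 2 - ((p.2 : ℝ) + (p.1 : ℝ) / 2) ^ 2 / y ^ 2) ^ 2 ≤ 4 * (Qf y p) ^ 2 / y ^ 2 := by
  have hQ0 := Qf_nonneg hy p
  have ha := a_sq_bound hy p
  have ht : ((p.2 : ℝ) + (p.1 : ℝ) / 2) ^ 2 / y ^ 2 ≤ Qf y p / y := by
    have h2 := sq2_le_Qf hy p
    rw [div_le_iff₀ hy] at h2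
    rw [div_le_div_iff₀ (by positivity : (0:ℝ) < y ^ 2) hy]
    nlinarith [h2, hy]
  have hM0 : (0:ℝ) ≤ Qf y p / y := by positivity
  have key : ((p.1 : ℝ) ^ 2 - ((p.2 : ℝ) + (p.1 : ℝ) / 2) ^ 2 / y ^ 2) ^ 2
      ≤ 4 * (Qf y p / y) ^ 2 := by
    have u0 : (0:ℝ) ≤ ((p.2 : ℝ) + (p.1 : ℝ) / 2) ^ 2 / y ^ 2 := by positivity
    nlinarith [mul_nonneg (sub_nonneg.2 ha) (add_nonneg hM0 (sq_nonneg ((p.1:ℝ)))),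
      mul_nonneg (sub_nonneg.2 ht) (add_nonneg hM0 u0),
      mul_nonneg (sq_nonneg ((p.1:ℝ))) u0, sq_nonneg (Qf y p / y)]
  calc ((p.1 : ℝ) ^ 2 - ((p.2 : ℝ) + (p.1 : ℝ) / 2) ^ 2 / y ^ 2) ^ 2
      ≤ 4 * (Qf y p / y) ^ 2 := key
    _ = 4 * (Qf y p) ^ 2 / y ^ 2 := by ring

/-- lower bound estimates for `S₁, S₂, S₃, S₄`. -/
theorem S_lower_bounds (α y : ℝ) (hα : 0 < α) (hy : 0 < y) :
    S1 α y ≥ 4 * Real.exp (-π * α * (y + 1 / (4 * y))) ∧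
    S2 (2 * α) y ≥ 2 / y ^ 4 * Real.exp (-2 * π * α / y) +
      4 * (1 - 1 / (4 * y ^ 2)) ^ 2 * Real.exp (-2 * π * α * (y + 1 / (4 * y))) ∧
    S3 (2 * α) y ≥ (4 * y + 1 / y) * Real.exp (-2 * π * α * (y + 1 / (4 * y))) ∧
    S4 α y ≥ 2 / y ^ 5 * Real.exp (-π * α / y) +
      4 * (1 - 1 / (4 * y ^ 2)) ^ 2 * (y + 1 / (4 * y)) *
        Real.exp (-π * α * (y + 1 / (4 * y))) := by
  have hπ := Real.pi_pos
  have hβ : (0:ℝ) < 2 * α := by linarith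
  refine ⟨?_, ?_, ?_, ?_⟩
  · -- S1
    have hsum : Summable (fun p : ℤ × ℤ => (p.1 : ℝ) ^ 2 * Real.exp (-π * α * Qf y p)) := by
      apply summable_main α y hα hy _ (2 / (π * α) / y)
      · intro p; positivity
      · intro p
        have hQ0 := Qf_nonneg hy p
        have h1 := sq1_le_Qf hy p
        have h2 := pow_le_exp_aux (π * α) (Qf y p) (by positivity) hQ0 1 one_pos
        norm_num at h2
        rw [div_mul_eq_mul_div, le_div_iff₀ hy]
        nlinarith [Real.exp_pos (π * α * Qf y p / 2)]
    have hle := Summable.sum_le_tsum ({((1:ℤ),(0:ℤ)), (1,-1), (-1,0), (-1,1)} : Finset (ℤ × ℤ))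
      (fun p _ => by positivity) hsum
    refine le_trans (le_of_eq ?_) hle
    rw [Finset.sum_insert (by decide), Finset.sum_insert (by decide),
      Finset.sum_insert (by decide), Finset.sum_singleton]
    unfold Qf
    push_cast
    ring_nf
  · -- S2
    have hsum : Summable (fun p : ℤ × ℤ =>
        ((p.1 : ℝ) ^ 2 - ((p.2 : ℝ) + (p.1 : ℝ) / 2) ^ 2 / y ^ 2) ^ 2 *
          Real.exp (-π * (2 * α) * Qf y p)) := by
      apply summable_main (2 * α) y hβ hy _ (4 * (4 / (π * (2 * α))) ^ 2 / y ^ 2)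
      · intro p; positivity
      · intro p
        have hQ0 := Qf_nonneg hy p
        have h2 := pow_le_exp_aux (π * (2 * α)) (Qf y p) (by positivity) hQ0 2 two_pos
        have hg := g2_bound hy p
        calc ((p.1 : ℝ) ^ 2 - ((p.2 : ℝ) + (p.1 : ℝ) / 2) ^ 2 / y ^ 2) ^ 2
            ≤ 4 * (Qf y p) ^ 2 / y ^ 2 := hg
          _ ≤ 4 * ((2 * (2:ℕ) / (π * (2 * α))) ^ 2 *
              Real.exp (π * (2 * α) * Qf y p / 2)) / y ^ 2 := by gcongr
          _ = 4 * (4 / (π * (2 * α))) ^ 2 / y ^ 2 *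
              Real.exp (π * (2 * α) * Qf y p / 2) := by push_cast; ring
    have hle := Summable.sum_le_tsum
      ({((0:ℤ),(1:ℤ)), (0,-1), (1,0), (1,-1), (-1,0), (-1,1)} : Finset (ℤ × ℤ))
      (fun p _ => mul_nonneg (sq_nonneg _) (Real.exp_pos _).le) hsum
    refine le_trans (le_of_eq ?_) hle
    rw [Finset.sum_insert (by decide), Finset.sum_insert (by decide),
      Finset.sum_insert (by decide), Finset.sum_insert (by decide),
      Finset.sum_insert (by decide), Finset.sum_singleton]
    unfold Qf
    push_cast
    ring_nf
  · -- S3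
    have hsum : Summable (fun p : ℤ × ℤ =>
        (p.1 : ℝ) ^ 2 * Qf y p * Real.exp (-π * (2 * α) * Qf y p)) := by
      apply summable_main (2 * α) y hβ hy _ ((4 / (π * (2 * α))) ^ 2 / y)
      · intro p; exact mul_nonneg (sq_nonneg _) (Qf_nonneg hy p)
      · intro p
        have hQ0 := Qf_nonneg hy p
        have h2 := pow_le_exp_aux (π * (2 * α)) (Qf y p) (by positivity) hQ0 2 two_pos
        have ha := a_sq_bound hy p
        calc (p.1 : ℝ) ^ 2 * Qf y p ≤ (Qf y p / y) * Qf y p :=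
              mul_le_mul_of_nonneg_right ha hQ0
          _ = (Qf y p) ^ 2 / y := by ring
          _ ≤ ((2 * (2:ℕ) / (π * (2 * α))) ^ 2 *
              Real.exp (π * (2 * α) * Qf y p / 2)) / y := by gcongr
          _ = (4 / (π * (2 * α))) ^ 2 / y *
              Real.exp (π * (2 * α) * Qf y p / 2) := by push_cast; ring
    have hle := Summable.sum_le_tsum ({((1:ℤ),(0:ℤ)), (1,-1), (-1,0), (-1,1)} : Finset (ℤ × ℤ))
      (fun p _ => mul_nonneg (mul_nonneg (sq_nonneg _) (Qf_nonneg hy p)) (Real.exp_pos _).le) hsum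
    refine le_trans (le_of_eq ?_) hle
    rw [Finset.sum_insert (by decide), Finset.sum_insert (by decide),
      Finset.sum_insert (by decide), Finset.sum_singleton]
    unfold Qf
    push_cast
    ring_nf
  · -- S4
    have hsum : Summable (fun p : ℤ × ℤ =>
        ((p.1 : ℝ) ^ 2 - ((p.2 : ℝ) + (p.1 : ℝ) / 2) ^ 2 / y ^ 2) ^ 2 * Qf y p *
          Real.exp (-π * α * Qf y p)) := by
      apply summable_main α y hα hy _ (4 * (6 / (π * α)) ^ 3 / y ^ 2)
      · intro p; exact mul_nonneg (sq_nonneg _) (Qf_nonneg hy p)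
      · intro p
        have hQ0 := Qf_nonneg hy p
        have h2 := pow_le_exp_aux (π * α) (Qf y p) (by positivity) hQ0 3 three_pos
        have hg := g2_bound hy p
        calc ((p.1 : ℝ) ^ 2 - ((p.2 : ℝ) + (p.1 : ℝ) / 2) ^ 2 / y ^ 2) ^ 2 * Qf y p
            ≤ (4 * (Qf y p) ^ 2 / y ^ 2) * Qf y p := mul_le_mul_of_nonneg_right hg hQ0
          _ = 4 * (Qf y p) ^ 3 / y ^ 2 := by ring
          _ ≤ 4 * ((2 * (3:ℕ) / (π * α)) ^ 3 *
              Real.exp (π * α * Qf y p / 2)) / y ^ 2 := by gcongr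
          _ = 4 * (6 / (π * α)) ^ 3 / y ^ 2 *
              Real.exp (π * α * Qf y p / 2) := by push_cast; ring
    have hle := Summable.sum_le_tsum
      ({((0:ℤ),(1:ℤ)), (0,-1), (1,0), (1,-1), (-1,0), (-1,1)} : Finset (ℤ × ℤ))
      (fun p _ => mul_nonneg (mul_nonneg (sq_nonneg _) (Qf_nonneg hy p)) (Real.exp_pos _).le) hsum
    refine le_trans (le_of_eq ?_) hle
    rw [Finset.sum_insert (by decide), Finset.sum_insert (by decide),
      Finset.sum_insert (by decide), Finset.sum_insert (by decide),
      Finset.sum_insert (by decide), Finset.sum_singleton]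
    unfold Qf
    push_cast
    ring_nf
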